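/- If φ ∈ F(M)** is a normal functional and h is a non-negative Lipschitz function on M with bounded support, then the functional φ ∘ W_h : f ↦ φ(f·h) is also normal. -/

import Mathlib

open Filter Metric Topology NNReal


/-- The set of Lipschitz functions `M → ℝ` vanishing at the base point, as a
submodule of `M → ℝ`. -/
def Lip0Sub (M : Type*) [MetricSpace M] (base : M) : Submodule ℝ (M → ℝ) where
  carrier := {f | (∃ K, LipschitzWith K f) ∧ f base = 0}
  add_mem' := by
    rintro f g ⟨⟨Kf, hf⟩, hf0⟩ ⟨⟨Kg, hg⟩, hg0⟩
    exact ⟨⟨Kf + Kg, hf.add hg⟩, by simp [Pi.add_apply, hf0, hg0]⟩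
  zero_mem' := ⟨⟨0, LipschitzWith.const 0⟩, rfl⟩
  smul_mem' := by
    rintro c f ⟨⟨Kf, hf⟩, hf0⟩
    exact ⟨⟨‖c‖₊ * Kf, (lipschitzWith_smul c).comp hf⟩, by simp [Pi.smul_apply, hf0]⟩

/-- The space `Lip₀(M)` of Lipschitz functions vanishing at the base point.
(A type synonym, so that it carries the Lipschitz-norm topology rather than the
topology of pointwise convergence.) -/
def Lip0 (M : Type*) [MetricSpace M] (base : M) : Type _ := ↥(Lip0Sub M base)

variable {M : Type*} [MetricSpace M] {base : M}

instance : AddCommGroup (Lip0 M base) :=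
  inferInstanceAs (AddCommGroup ↥(Lip0Sub M base))

noncomputable instance : Module ℝ (Lip0 M base) :=
  inferInstanceAs (Module ℝ ↥(Lip0Sub M base))

/-- An element of `Lip₀(M)` is a function on `M`. -/
instance : CoeFun (Lip0 M base) (fun _ => M → ℝ) :=
  ⟨fun f => (Subtype.val f : M → ℝ)⟩

theorem Lip0.prop (f : Lip0 M base) :
    (∃ K, LipschitzWith K (f : M → ℝ)) ∧ (f : M → ℝ) base = 0 :=
  Subtype.prop f

/-- The quantity defining the Lipschitz norm. -/
noncomputable def Lip0.lipNorm (f : Lip0 M base) : ℝ :=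
  ⨆ p : M × M, |f p.1 - f p.2| / dist p.1 p.2

theorem Lip0.ratio_le (f : Lip0 M base) {K : ℝ≥0} (hK : LipschitzWith K (f : M → ℝ))
    (p : M × M) : |f p.1 - f p.2| / dist p.1 p.2 ≤ K := by
  rcases eq_or_ne p.1 p.2 with h | h
  · simp [h, K.coe_nonneg]
  · rw [div_le_iff₀ (dist_pos.2 h)]
    simpa [Real.dist_eq] using hK.dist_le_mul p.1 p.2

theorem Lip0.bddAbove (f : Lip0 M base) :
    BddAbove (Set.range fun p : M × M => |f p.1 - f p.2| / dist p.1 p.2) := by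
  obtain ⟨K, hK⟩ := f.prop.1
  exact ⟨K, by rintro r ⟨p, rfl⟩; exact f.ratio_le hK p⟩

theorem Lip0.ratio_le_lipNorm (f : Lip0 M base) (p : M × M) :
    |f p.1 - f p.2| / dist p.1 p.2 ≤ f.lipNorm :=
  le_ciSup f.bddAbove p

theorem Lip0.lipNorm_nonneg (f : Lip0 M base) : 0 ≤ f.lipNorm := by
  have := f.ratio_le_lipNorm (base, base)
  simpa using this

/-- The Lipschitz norm on `Lip₀(M)`: the best Lipschitz constant,
`‖f‖ = sup_{x ≠ y} |f x - f y| / d(x,y)`. -/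
noncomputable instance Lip0.normedAddCommGroup :
    NormedAddCommGroup (Lip0 M base) :=
  AddGroupNorm.toNormedAddCommGroup
    { toFun := fun f => f.lipNorm
      map_zero' := by
        have h : ∀ p : M × M,
            |(0 : Lip0 M base) p.1 - (0 : Lip0 M base) p.2| / dist p.1 p.2 = 0 := by
          intro p
          show |(0:ℝ) - 0| / _ = 0
          simp
        haveI : Nonempty (M × M) := ⟨(base, base)⟩
        simp only [Lip0.lipNorm, h, ciSup_const]
      add_le' := by
        intro f g
        haveI : Nonempty (M × M) := ⟨(base, base)⟩
        apply ciSup_le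
        intro p
        rcases eq_or_ne p.1 p.2 with h | h
        · have : dist p.1 p.2 = 0 := by simp [h]
          rw [this, div_zero]
          exact add_nonneg f.lipNorm_nonneg g.lipNorm_nonneg
        · have hd : (0:ℝ) < dist p.1 p.2 := dist_pos.2 h
          have h1 : |(f + g) p.1 - (f + g) p.2| ≤ |f p.1 - f p.2| + |g p.1 - g p.2| := by
            show |(f p.1 + g p.1) - (f p.2 + g p.2)| ≤ _
            rw [add_sub_add_comm]
            exact abs_add_le _ _
          calc |(f + g) p.1 - (f + g) p.2| / dist p.1 p.2
              ≤ (|f p.1 - f p.2| + |g p.1 - g p.2|) / dist p.1 p.2 := by gcongr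
            _ ≤ f.lipNorm + g.lipNorm := by
                rw [add_div]
                exact add_le_add (f.ratio_le_lipNorm p) (g.ratio_le_lipNorm p)
      neg' := by
        intro f
        show Lip0.lipNorm _ = Lip0.lipNorm _
        unfold Lip0.lipNorm
        congr 1
        funext p
        show |(- f p.1) - (- f p.2)| / _ = _
        rw [neg_sub_neg, abs_sub_comm]
      eq_zero_of_map_eq_zero' := by
        intro f hf
        have hconst : ∀ x y : M, f x = f y := by
          intro x y
          rcases eq_or_ne x y with h | h
          · rw [h]
          · have h1 : |f x - f y| / dist x y ≤ 0 := hf ▸ f.ratio_le_lipNorm (x, y)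
            have h2 : (0:ℝ) ≤ |f x - f y| / dist x y :=
              div_nonneg (abs_nonneg _) dist_nonneg
            rcases div_eq_zero_iff.1 (le_antisymm h1 h2) with h3 | h3
            · exact sub_eq_zero.1 (abs_eq_zero.1 h3)
            · exact absurd h3 (dist_ne_zero.2 h)
        have hzero : ∀ x, f x = 0 := fun x => (hconst x base).trans f.prop.2
        exact Subtype.ext (funext hzero) }

noncomputable instance Lip0.normedSpace : NormedSpace ℝ (Lip0 M base) :=
  { norm_smul_le := by
      intro c f
      haveI : Nonempty (M × M) := ⟨(base, base)⟩
      apply ciSup_le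
      intro p
      have heq : |(c • f) p.1 - (c • f) p.2| / dist p.1 p.2
          = |c| * (|f p.1 - f p.2| / dist p.1 p.2) := by
        show |c * f p.1 - c * f p.2| / dist p.1 p.2 = _
        rw [← mul_sub, abs_mul, mul_div_assoc]
      rw [heq]
      calc |c| * (|f p.1 - f p.2| / dist p.1 p.2)
          ≤ |c| * f.lipNorm :=
            mul_le_mul_of_nonneg_left (f.ratio_le_lipNorm p) (abs_nonneg c)
        _ = ‖c‖ * ‖f‖ := rfl }

/-- Evaluation functional `δ(x) ∈ Lip₀(M)*`. -/
noncomputable def deltaF (base : M) (x : M) : StrongDual ℝ (Lip0 M base) :=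
  LinearMap.mkContinuous
    { toFun := fun f => f x
      map_add' := fun _ _ => rfl
      map_smul' := fun _ _ => rfl }
    (dist x base)
    (by
      intro f
      show |f x| ≤ dist x base * ‖f‖
      rcases eq_or_ne x base with h | h
      · simp [h, f.prop.2, mul_nonneg dist_nonneg f.lipNorm_nonneg]
      · have h1 : |f x - f base| / dist x base ≤ ‖f‖ := f.ratio_le_lipNorm (x, base)
        have h2 : |f x - f base| ≤ dist x base * ‖f‖ := by
          rw [div_le_iff₀ (dist_pos.2 (by simpa using h))] at h1
          linarith [h1]
        simpa [f.prop.2] using h2)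

/-- The Lipschitz-free space `F(M)`, realized as the closed linear span of the
evaluation functionals inside `Lip₀(M)*`. -/
noncomputable def FreeSpace (base : M) : Set (StrongDual ℝ (Lip0 M base)) :=
  closure ((Submodule.span ℝ (Set.range (deltaF base)) :
    Submodule ℝ (StrongDual ℝ (Lip0 M base))) : Set (StrongDual ℝ (Lip0 M base)))

/-- A functional `φ ∈ Lip₀(M)* = F(M)**` is *normal* if for every norm-bounded net
converging pointwise and monotonically to `f ∈ Lip₀(M)`, the values `φ(fᵢ)` converge
to `φ(f)`. -/
def IsNormal (base : M) (φ : StrongDual ℝ (Lip0 M base)) : Prop :=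
  ∀ (ι : Type) [Preorder ι] [Nonempty ι] [IsDirected ι (· ≤ ·)]
    (F : ι → Lip0 M base) (f : Lip0 M base) (C : ℝ),
    (∀ i, ‖F i‖ ≤ C) →
    ((∀ x, Monotone fun i => (F i) x) ∨ (∀ x, Antitone fun i => (F i) x)) →
    (∀ x, Tendsto (fun i => (F i) x) atTop (𝓝 (f x))) →
    Tendsto (fun i => φ (F i)) atTop (𝓝 (φ f))

/-- if `φ` is normal and `h ≥ 0` is Lipschitz with bounded support, then
`φ ∘ W_h : f ↦ φ(f·h)` is normal. -/
theorem normal_comp_weighting [CompleteSpace M] (base : M)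
    (φ : StrongDual ℝ (Lip0 M base)) (hφ : IsNormal base φ)
    (h : M → ℝ) (K : ℝ≥0) (hh : LipschitzWith K h) (hpos : ∀ x, 0 ≤ h x)
    (R : ℝ) (hsupp : ∀ x, h x ≠ 0 → dist x base ≤ R)
    (W : Lip0 M base →L[ℝ] Lip0 M base)
    (hW : ∀ (f : Lip0 M base) (x : M), (W f) x = f x * h x) :
    IsNormal base (φ.comp W) := by
  intro ι _ _ _ F f C hC hmono hconv
  have key := hφ ι (fun i => W (F i)) (W f) (‖W‖ * C)
    (fun i => (W.le_opNorm (F i)).trans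
      (mul_le_mul_of_nonneg_left (hC i) (norm_nonneg W)))
    (by
      rcases hmono with hm | hm
      · left; intro x i j hij
        simp only [hW]
        exact mul_le_mul_of_nonneg_right (hm x hij) (hpos x)
      · right; intro x i j hij
        simp only [hW]
        exact mul_le_mul_of_nonneg_right (hm x hij) (hpos x))
    (by
      intro x
      simp only [hW]
      exact (hconv x).mul_const (h x))
  exact key
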